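/- Let p be a prime and let r, k, m be natural numbers with r ≤ k ≤ m < p. Then the (r+1)×(r+1) matrix over 𝔽_p whose entry in row i and column j (for 0 ≤ i, j ≤ r) is the binomial coefficient C(m−i, k−j) reduced modulo p, is invertible over 𝔽_p. -/

import Mathlib

/-- Auxiliary numerical identity in `ℕ`:
`(c+i)! * ((b+j)! * C(b+c+i, b+j)) = descFactorial (c+i) j * (b+c+i)!`. -/
lemma binom_aux (b c i j : ℕ) :
    (c + i).factorial * ((b + j).factorial * Nat.choose (b + c + i) (b + j)) =
      Nat.descFactorial (c + i) j * (b + c + i).factorial := by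
  rcases le_or_gt j (c + i) with h | h
  · have hbj : b + j ≤ b + c + i := by omega
    apply Nat.eq_of_mul_eq_mul_right (Nat.factorial_pos (c + i - j))
    have h1 : Nat.choose (b + c + i) (b + j) * (b + j).factorial *
        (b + c + i - (b + j)).factorial = (b + c + i).factorial :=
      Nat.choose_mul_factorial_mul_factorial hbj
    have h2 : (c + i - j).factorial * Nat.descFactorial (c + i) j =
        (c + i).factorial := Nat.factorial_mul_descFactorial h
    have h3 : b + c + i - (b + j) = c + i - j := by omega
    rw [h3] at h1
    calc (c + i).factorial * ((b + j).factorial * Nat.choose (b + c + i) (b + j)) *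
          (c + i - j).factorial
        = (c + i).factorial * (Nat.choose (b + c + i) (b + j) * (b + j).factorial *
            (c + i - j).factorial) := by ring
      _ = (c + i).factorial * (b + c + i).factorial := by rw [h1]
      _ = ((c + i - j).factorial * Nat.descFactorial (c + i) j) *
            (b + c + i).factorial := by rw [h2]
      _ = Nat.descFactorial (c + i) j * (b + c + i).factorial *
            (c + i - j).factorial := by ring
  · have h1 : Nat.descFactorial (c + i) j = 0 :=
      Nat.descFactorial_eq_zero_iff_lt.mpr h
    have h2 : Nat.choose (b + c + i) (b + j) = 0 :=
      Nat.choose_eq_zero_of_lt (by omega)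
    simp [h1, h2]

/-- The `(r+1)×(r+1)` matrix of binomial coefficients `C(m−i, k−j)` (for `0 ≤ i, j ≤ r`)
reduced modulo a prime `p` is invertible over `𝔽_p`, provided `r ≤ k ≤ m < p`. -/
theorem binomial_matrix_invertible (p : ℕ) [Fact p.Prime] (r k m : ℕ)
    (hrk : r ≤ k) (hkm : k ≤ m) (hmp : m < p) :
    IsUnit (Matrix.det
      (Matrix.of fun i j : Fin (r + 1) =>
        ((Nat.choose (m - (i : ℕ)) (k - (j : ℕ)) : ℕ) : ZMod p))) := by
  have hp : p.Prime := Fact.out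
  set K := ZMod p
  set b := k - r with hb
  set c := m - k with hc
  -- the un-reversed matrix
  set N : Matrix (Fin (r + 1)) (Fin (r + 1)) K :=
    Matrix.of (fun i j : Fin (r + 1) =>
      ((Nat.choose (b + c + (i : ℕ)) (b + (j : ℕ)) : ℕ) : K)) with hN
  have key : (Matrix.of fun i j : Fin (r + 1) =>
      ((Nat.choose (m - (i : ℕ)) (k - (j : ℕ)) : ℕ) : K)) =
      N.submatrix Fin.revPerm Fin.revPerm := by
    ext i j
    have hi := i.isLt
    have hj := j.isLt
    simp only [Matrix.submatrix_apply, Matrix.of_apply, hN, Fin.revPerm_apply, Fin.val_rev]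
    congr 2 <;> omega
  rw [key, Matrix.det_submatrix_equiv_self]
  -- nonvanishing of factorials mod p
  have hfac : ∀ n : ℕ, n < p → ((n.factorial : ℕ) : K) ≠ 0 := by
    intro n hn
    rw [Ne, ZMod.natCast_eq_zero_iff]
    intro hdvd
    exact absurd ((Nat.Prime.dvd_factorial hp).mp hdvd) (by omega)
  -- the evaluation points
  set v : Fin (r + 1) → K := fun i => ((c + (i : ℕ) : ℕ) : K) with hv
  -- descPochhammer polynomials
  have hdeg : ∀ j : Fin (r + 1), (descPochhammer K (j : ℕ)).natDegree = (j : ℕ) :=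
    fun j => descPochhammer_natDegree K (j : ℕ)
  have hmonic : ∀ j : Fin (r + 1), (descPochhammer K (j : ℕ)).Monic :=
    fun j => monic_descPochhammer K (j : ℕ)
  -- two computations of the determinant of the scaled matrix
  have h1 : Matrix.det (Matrix.of fun i j : Fin (r + 1) =>
      (((c + (i : ℕ)).factorial : ℕ) : K) *
        ((((b + (j : ℕ)).factorial : ℕ) : K) * N i j)) =
      (∏ i : Fin (r + 1), (((c + (i : ℕ)).factorial : ℕ) : K)) *
        ((∏ j : Fin (r + 1), (((b + (j : ℕ)).factorial : ℕ) : K)) * N.det) := by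
    have e1 := Matrix.det_mul_column (fun i : Fin (r + 1) => (((c + (i : ℕ)).factorial : ℕ) : K))
      (Matrix.of (fun i j : Fin (r + 1) => (((b + (j : ℕ)).factorial : ℕ) : K) * N i j))
    have e2 := Matrix.det_mul_row (fun j : Fin (r + 1) => (((b + (j : ℕ)).factorial : ℕ) : K)) N
    rw [e2] at e1
    simpa only [Matrix.of_apply] using e1
  have h2 : Matrix.det (Matrix.of fun i j : Fin (r + 1) =>
      (((c + (i : ℕ)).factorial : ℕ) : K) *
        ((((b + (j : ℕ)).factorial : ℕ) : K) * N i j)) =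
      (∏ i : Fin (r + 1), (((b + c + (i : ℕ)).factorial : ℕ) : K)) *
        (Matrix.vandermonde v).det := by
    have hentry : ∀ i j : Fin (r + 1),
        (((c + (i : ℕ)).factorial : ℕ) : K) *
          ((((b + (j : ℕ)).factorial : ℕ) : K) * N i j) =
        (((b + c + (i : ℕ)).factorial : ℕ) : K) *
          ((descPochhammer K (j : ℕ)).eval (v i)) := by
      intro i j
      have := binom_aux b c (i : ℕ) (j : ℕ)
      have hcast : (((c + (i : ℕ)).factorial * ((b + (j : ℕ)).factorial *
          Nat.choose (b + c + (i : ℕ)) (b + (j : ℕ))) : ℕ) : K) =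
          ((Nat.descFactorial (c + (i : ℕ)) (j : ℕ) * (b + c + (i : ℕ)).factorial : ℕ) : K) := by
        rw [this]
      simp only [K, Nat.cast_mul] at hcast
      rw [hv]
      simp only [descPochhammer_eval_eq_descFactorial]
      simp only [Matrix.of_apply, hN]
      simp only [K, Nat.cast_mul]
      linear_combination hcast
    calc Matrix.det (Matrix.of fun i j : Fin (r + 1) =>
          (((c + (i : ℕ)).factorial : ℕ) : K) *
            ((((b + (j : ℕ)).factorial : ℕ) : K) * N i j))
        = Matrix.det (Matrix.of fun i j : Fin (r + 1) =>
            (((b + c + (i : ℕ)).factorial : ℕ) : K) *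
              ((descPochhammer K (j : ℕ)).eval (v i))) := by
          congr 1; ext i j
          simpa using hentry i j
      _ = (∏ i : Fin (r + 1), (((b + c + (i : ℕ)).factorial : ℕ) : K)) *
            Matrix.det (Matrix.of fun i j : Fin (r + 1) =>
              ((descPochhammer K (j : ℕ)).eval (v i))) := by
          exact Matrix.det_mul_column _ _
      _ = (∏ i : Fin (r + 1), (((b + c + (i : ℕ)).factorial : ℕ) : K)) *
            (Matrix.vandermonde v).det := by
          rw [Matrix.det_eval_matrixOfPolynomials_eq_det_vandermonde v
            (fun j : Fin (r + 1) => descPochhammer K (j : ℕ)) hdeg hmonic]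
  -- the vandermonde determinant is nonzero
  have hvdm : (Matrix.vandermonde v).det ≠ 0 := by
    rw [Matrix.det_vandermonde_ne_zero_iff]
    intro i j hij
    have hi := i.isLt
    have hj := j.isLt
    have h1 : (c + (i : ℕ)) < p := by omega
    have h2 : (c + (j : ℕ)) < p := by omega
    have := congrArg ZMod.val hij
    rw [hv] at this
    simp only [ZMod.val_cast_of_lt h1, ZMod.val_cast_of_lt h2] at this
    exact Fin.ext (by omega)
  -- conclude
  rw [isUnit_iff_ne_zero]
  intro hdet
  have hz : (∏ i : Fin (r + 1), (((b + c + (i : ℕ)).factorial : ℕ) : K)) *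
      (Matrix.vandermonde v).det = 0 := by
    rw [← h2, h1, hdet, mul_zero, mul_zero]
  have hprod : (∏ i : Fin (r + 1), (((b + c + (i : ℕ)).factorial : ℕ) : K)) ≠ 0 :=
    Finset.prod_ne_zero_iff.mpr fun i _ => hfac _ (by have := i.isLt; omega)
  rcases mul_eq_zero.mp hz with h | h
  · exact hprod h
  · exact hvdm h
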